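/- Let V ⊂ H ⊂ V* be a Gelfand triple, φ: V → ℝ convex and Gateaux differentiable, f ∈ L²(0,T;V*), u₀ ∈ V. A function u ∈ L²(0,T;V) ∩ H¹(0,T;V*) with u(0) = u₀ satisfies u_t + ∂φ(u) = f a.e. in (0,T) if and only if Φ(u) = 0, where Φ(w) = ∫₀ᵀ [φ(w) + φ*(f − w_t) + ⟨w_t − f, w⟩] dt. -/

import Mathlib

open MeasureTheory Filter Set Topology

/-- Gradient inequality for a convex Gateaux-differentiable function. -/
private lemma grad_ineq {V : Type*} [NormedAddCommGroup V] [NormedSpace ℝ V]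
    (φ : V → ℝ) (hconv : ConvexOn ℝ Set.univ φ)
    (dφ : V → V →L[ℝ] ℝ)
    (hGateaux : ∀ x v : V, HasDerivAt (fun s : ℝ => φ (x + s • v)) (dφ x v) 0)
    (x v : V) : φ x + dφ x (v - x) ≤ φ v := by
  have hg : HasDerivAt (fun s : ℝ => φ (x + s • (v - x))) (dφ x (v - x)) 0 :=
    hGateaux x (v - x)
  have tend : Tendsto (fun s : ℝ => s⁻¹ • (φ (x + (0 + s) • (v - x)) - φ (x + (0:ℝ) • (v - x))))
      (𝓝[≠] (0:ℝ)) (𝓝 (dφ x (v - x))) :=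
    hg.tendsto_slope_zero
  have tend' : Tendsto (fun s : ℝ => s⁻¹ • (φ (x + (0 + s) • (v - x)) - φ (x + (0:ℝ) • (v - x))))
      (𝓝[>] (0:ℝ)) (𝓝 (dφ x (v - x))) :=
    tend.mono_left (nhdsWithin_mono _ (fun y hy => ne_of_gt hy))
  have key : ∀ s ∈ Set.Ioo (0:ℝ) 1,
      s⁻¹ • (φ (x + (0 + s) • (v - x)) - φ (x + (0:ℝ) • (v - x))) ≤ φ v - φ x := by
    intro s hs
    have hcv := hconv.2 (Set.mem_univ x) (Set.mem_univ v)
      (by linarith [hs.2] : (0:ℝ) ≤ 1 - s) hs.1.le (by ring)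
    have heq : (1 - s) • x + s • v = x + s • (v - x) := by
      rw [smul_sub, sub_smul, one_smul]; abel
    rw [heq] at hcv
    have h1 : φ (x + s • (v - x)) - φ x ≤ s * (φ v - φ x) := by
      have : (1 - s) • φ x + s • φ v = φ x + s * (φ v - φ x) := by
        simp [smul_eq_mul]; ring
      linarith [this ▸ hcv]
    have hs0 : (0:ℝ) < s := hs.1
    simp only [zero_add, zero_smul, add_zero, smul_eq_mul]
    rw [inv_mul_le_iff₀ hs0]
    linarith
  have : dφ x (v - x) ≤ φ v - φ x :=
    le_of_tendsto tend' (Filter.mem_of_superset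
      (Ioo_mem_nhdsGT_of_mem ⟨le_refl (0:ℝ), one_pos⟩) key)
  linarith

/-- Uniqueness of the subgradient for a Gateaux-differentiable function. -/
private lemma subgrad_unique {V : Type*} [NormedAddCommGroup V] [NormedSpace ℝ V]
    (φ : V → ℝ) (dφ : V → V →L[ℝ] ℝ)
    (hGateaux : ∀ x v : V, HasDerivAt (fun s : ℝ => φ (x + s • v)) (dφ x v) 0)
    (x : V) (g : V →L[ℝ] ℝ) (hsub : ∀ v, φ x + g (v - x) ≤ φ v) : g = dφ x := by
  ext v
  have hψ : HasDerivAt (fun s : ℝ => φ (x + s • v) - s * g v) (dφ x v - g v) 0 :=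
    (hGateaux x v).sub (hasDerivAt_mul_const (g v))
  have hmin : IsLocalMin (fun s : ℝ => φ (x + s • v) - s * g v) 0 := by
    apply Filter.Eventually.of_forall
    intro s
    have := hsub (x + s • v)
    have hgs : g ((x + s • v) - x) = s * g v := by
      simp [_root_.map_smul, smul_eq_mul]
    rw [hgs] at this
    simp only [zero_smul, add_zero, zero_mul, sub_zero]
    linarith
  have := hmin.hasDerivAt_eq_zero hψ
  linarith

/-- The Brezis–Ekeland principle. In a Gelfand triple `V ⊂ H ⊂ V*`
(modeled by a dense injective embedding `ι : V → H` into a Hilbert space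
and the induced map `j : V → V*`), with `φ : V → ℝ` convex and Gateaux
differentiable with derivative `dφ`, Fenchel conjugate `φ*`,
`f ∈ L²(0,T;V*)`, `u₀ ∈ V`: a function `u ∈ L²(0,T;V) ∩ H¹(0,T;V*)` with
`u(0) = u₀` satisfies `u_t + ∂φ(u) = f` a.e. in `(0,T)` if and only if
`Φ(u) = ∫₀ᵀ [φ(u) + φ*(f − u_t) + ⟨u_t − f, u⟩] dt = 0`. -/
theorem brezis_ekeland_principle {V H : Type*}
    [NormedAddCommGroup V] [NormedSpace ℝ V] [CompleteSpace V]
    [NormedAddCommGroup H] [InnerProductSpace ℝ H] [CompleteSpace H]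
    (ι : V →L[ℝ] H) (hι : Function.Injective ι) (hdense : DenseRange ι)
    (j : V →L[ℝ] V →L[ℝ] ℝ) (hj : ∀ v x : V, j v x = (inner ℝ (ι v) (ι x) : ℝ))
    (T : ℝ) (hT : 0 < T)
    (φ : V → ℝ) (hconv : ConvexOn ℝ Set.univ φ)
    (dφ : V → V →L[ℝ] ℝ)
    (hGateaux : ∀ x v : V, HasDerivAt (fun s : ℝ => φ (x + s • v)) (dφ x v) 0)
    (φstar : (V →L[ℝ] ℝ) → ℝ)
    (hstar : ∀ g : V →L[ℝ] ℝ, IsLUB (Set.range fun v => g v - φ v) (φstar g))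
    (f : ℝ → V →L[ℝ] ℝ) (u0 : V) (u : ℝ → V) (ut : ℝ → V →L[ℝ] ℝ)
    (hu0 : u 0 = u0)
    (hderiv : ∀ t ∈ Set.Ioo (0 : ℝ) T, HasDerivAt (fun s => j (u s)) (ut t) t)
    (hint : IntervalIntegrable
      (fun t => φ (u t) + φstar (f t - ut t) + (ut t - f t) (u t))
      MeasureTheory.volume 0 T) :
    (∀ᵐ t ∂(MeasureTheory.volume.restrict (Set.Ioo (0 : ℝ) T)),
        ut t + dφ (u t) = f t) ↔
      (∫ t in (0 : ℝ)..T,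
        (φ (u t) + φstar (f t - ut t) + (ut t - f t) (u t))) = 0 := by
  set F : ℝ → ℝ := fun t => φ (u t) + φstar (f t - ut t) + (ut t - f t) (u t) with hF
  -- Fenchel–Young inequality: F is nonnegative everywhere
  have hFY : ∀ t, 0 ≤ F t := by
    intro t
    have hub := (hstar (f t - ut t)).1 (Set.mem_range_self (u t))
    have : (ut t - f t) (u t) = -((f t - ut t) (u t)) := by
      rw [ContinuousLinearMap.sub_apply, ContinuousLinearMap.sub_apply]; ring
    simp only [hF, this]
    linarith
  -- Value of φ* at the gradient
  have hval : ∀ x : V, φstar (dφ x) = dφ x x - φ x := by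
    intro x
    refine (hstar (dφ x)).unique (IsGreatest.isLUB ⟨Set.mem_range_self x, ?_⟩)
    rintro _ ⟨v, rfl⟩
    have h := grad_ineq φ hconv dφ hGateaux x v
    rw [ContinuousLinearMap.map_sub] at h
    show dφ x v - φ v ≤ dφ x x - φ x
    linarith
  -- rewrite the interval integral as an integral over Ioo
  have hint_eq : (∫ t in (0:ℝ)..T, F t) = ∫ t in Set.Ioo (0:ℝ) T, F t := by
    rw [intervalIntegral.integral_of_le hT.le, MeasureTheory.integral_Ioc_eq_integral_Ioo]
  constructor
  · intro hae
    have hzero : ∀ᵐ t ∂(volume.restrict (Set.Ioo (0:ℝ) T)), F t = 0 := by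
      filter_upwards [hae] with t ht
      have hfe : f t - ut t = dφ (u t) := by rw [← ht]; abel
      have h1 : (ut t - f t) (u t) = -(dφ (u t) (u t)) := by
        have : ut t - f t = -(f t - ut t) := by abel
        rw [this, hfe]; simp
      simp only [hF, hfe, h1, hval (u t)]
      ring
    rw [hint_eq]
    rw [MeasureTheory.integral_congr_ae hzero]
    simp
  · intro hI
    have hintOn : MeasureTheory.IntegrableOn F (Set.Ioo (0:ℝ) T) volume :=
      (hint.1).mono_set Set.Ioo_subset_Ioc_self
    have hI' : ∫ t in Set.Ioo (0:ℝ) T, F t = 0 := by rw [← hint_eq]; exact hI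
    have hzero : ∀ᵐ t ∂(volume.restrict (Set.Ioo (0:ℝ) T)), F t = 0 := by
      have := (MeasureTheory.integral_eq_zero_iff_of_nonneg
        (fun t => hFY t) hintOn).mp hI'
      filter_upwards [this] with t ht
      simpa using ht
    filter_upwards [hzero] with t ht
    -- at such t, f t - ut t is a subgradient of φ at u t
    set g := f t - ut t with hg
    have hφstar : φstar g = g (u t) - φ (u t) := by
      have h1 : (ut t - f t) (u t) = -(g (u t)) := by
        have : ut t - f t = -g := by rw [hg]; abel
        rw [this]; simp
      simp only [hF, h1] at ht
      linarith
    have hsub : ∀ v, φ (u t) + g (v - u t) ≤ φ v := by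
      intro v
      have hub := (hstar g).1 (Set.mem_range_self v)
      rw [hφstar] at hub
      rw [ContinuousLinearMap.map_sub]
      linarith
    have := subgrad_unique φ dφ hGateaux (u t) g hsub
    rw [← this, hg]
    abel
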